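/- Let Q : ℤʳ → ℤ be an S_r-invariant quadratic form with p = Q(e₁) and q = B_Q(e₁,e₂). Then 2p = q if and only if Q(y) = p·(Σᵢ yᵢ)² for all y ∈ ℤʳ. -/

import Mathlib

open Finset

private lemma single_comp_perm {r : ℕ} (σ : Equiv.Perm (Fin r)) (a : Fin r) :
    (Pi.single a (1:ℤ)) ∘ σ = Pi.single (σ.symm a) 1 := by
  funext j
  simp [Function.comp, Pi.single_apply, Equiv.apply_eq_iff_eq_symm_apply]

private lemma exists_perm_two {r : ℕ} {a b j0 j1 : Fin r} (hab : a ≠ b) (hj : j0 ≠ j1) :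
    ∃ σ : Equiv.Perm (Fin r), σ.symm a = j0 ∧ σ.symm b = j1 := by
  have hb0 : (Equiv.swap j0 a).symm b ≠ j0 := by
    intro hc
    have hba : b = Equiv.swap j0 a j0 := by
      conv_lhs => rw [← Equiv.apply_symm_apply (Equiv.swap j0 a) b, hc]
    rw [Equiv.swap_apply_left] at hba
    exact hab hba.symm
  refine ⟨(Equiv.swap j1 ((Equiv.swap j0 a).symm b)).trans (Equiv.swap j0 a), ?_, ?_⟩
  · simp only [Equiv.symm_trans_apply, Equiv.symm_swap, Equiv.swap_apply_right]
    exact Equiv.swap_apply_of_ne_of_ne hj (Ne.symm hb0)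
  · simp only [Equiv.symm_trans_apply, Equiv.symm_swap, Equiv.swap_apply_right]

private lemma Q_single_pair {r : ℕ} (Q : (Fin r → ℤ) → ℤ)
    (hinv : ∀ (σ : Equiv.Perm (Fin r)) (y : Fin r → ℤ), Q (y ∘ σ) = Q y)
    {a b j0 j1 : Fin r} (hab : a ≠ b) (hj : j0 ≠ j1) :
    Q ((Pi.single a 1 : Fin r → ℤ) + Pi.single b 1)
      = Q ((Pi.single j0 1 : Fin r → ℤ) + Pi.single j1 1) := by
  obtain ⟨σ, hsa, hsb⟩ := exists_perm_two hab hj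
  have h := hinv σ ((Pi.single a 1 : Fin r → ℤ) + Pi.single b 1)
  have hcomp : ((Pi.single a 1 : Fin r → ℤ) + Pi.single b 1) ∘ σ
      = (Pi.single j0 1 : Fin r → ℤ) + Pi.single j1 1 := by
    have e1 : ((Pi.single a 1 : Fin r → ℤ) + Pi.single b 1) ∘ σ
        = ((Pi.single a 1 : Fin r → ℤ) ∘ σ) + ((Pi.single b 1 : Fin r → ℤ) ∘ σ) := rfl
    rw [e1, single_comp_perm, single_comp_perm, hsa, hsb]
  rw [hcomp] at h
  exact h.symm

set_option maxHeartbeats 1000000 in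
/-- For an `S_r`-invariant quadratic form `Q` on `ℤʳ` with `p = Q(e₁)`,
`q = B_Q(e₁,e₂)`: `2p = q` iff `Q(y) = p·(Σᵢ yᵢ)²` for all `y`. -/
theorem stmt4 (r : ℕ) (hr : 2 ≤ r)
    (Q : (Fin r → ℤ) → ℤ)
    (hQ : ∀ (k : ℤ) (y : Fin r → ℤ), Q (k • y) = k ^ 2 * Q y)
    (B : (Fin r → ℤ) → (Fin r → ℤ) → ℤ)
    (hBdef : ∀ y₁ y₂, B y₁ y₂ = Q (y₁ + y₂) - Q y₁ - Q y₂)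
    (hBadd : ∀ y₁ y₂ y₃, B (y₁ + y₂) y₃ = B y₁ y₃ + B y₂ y₃)
    (hinv : ∀ (σ : Equiv.Perm (Fin r)) (y : Fin r → ℤ), Q (y ∘ σ) = Q y)
    (p q : ℤ)
    (hp : p = Q (Pi.single (⟨0, by omega⟩ : Fin r) 1))
    (hq : q = B (Pi.single (⟨0, by omega⟩ : Fin r) 1)
              (Pi.single (⟨1, by omega⟩ : Fin r) 1)) :
    2 * p = q ↔ ∀ y : Fin r → ℤ, Q y = p * (∑ i, y i) ^ 2 := by
  have i0 : Fin r := ⟨0, by omega⟩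
  have i1 : Fin r := ⟨1, by omega⟩
  -- basic facts
  have hQ0 : Q 0 = 0 := by
    have := hQ 0 0
    simpa using this
  have hBsymm : ∀ x y, B x y = B y x := by
    intro x y
    rw [hBdef, hBdef, add_comm]
    ring
  have hBadd' : ∀ x y z, B x (y + z) = B x y + B x z := by
    intro x y z
    rw [hBsymm x (y + z), hBadd, hBsymm y x, hBsymm z x]
  have hBsmul : ∀ (k : ℤ) (x y : Fin r → ℤ), B (k • x) y = k * B x y := by
    intro k x y
    let g : (Fin r → ℤ) →+ ℤ := AddMonoidHom.mk' (fun x => B x y) (fun a b => hBadd a b y)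
    have := map_zsmul g k x
    simpa [g] using this
  have hBsum : ∀ (x : Fin r → ℤ) (s : Finset (Fin r)) (f : Fin r → (Fin r → ℤ)),
      B x (∑ i ∈ s, f i) = ∑ i ∈ s, B x (f i) := by
    intro x s f
    induction s using Finset.induction with
    | empty =>
        simp only [Finset.sum_empty]
        rw [hBdef]
        simp [hQ0]
    | @insert a s ha ih =>
        rw [Finset.sum_insert ha, Finset.sum_insert ha, hBadd', ih]
  -- values on basis vectors
  have hQsingle : ∀ a : Fin r, Q (Pi.single a 1) = p := by
    intro a
    have hp' : p = Q (Pi.single (⟨0, by omega⟩ : Fin r) 1) := hp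
    rw [hp']
    have h := hinv (Equiv.swap a (⟨0, by omega⟩ : Fin r)) (Pi.single a 1)
    rw [single_comp_perm] at h
    rw [← h]
    congr 1
    congr 1
    simp
  have hBsingle : ∀ a b : Fin r, a ≠ b →
      B (Pi.single a 1) (Pi.single b 1) = q := by
    intro a b hab
    have hj01 : (⟨0, by omega⟩ : Fin r) ≠ (⟨1, by omega⟩ : Fin r) := by
      simp [Fin.ext_iff]
    have hq' : q = B (Pi.single (⟨0, by omega⟩ : Fin r) 1)
        (Pi.single (⟨1, by omega⟩ : Fin r) 1) := hq
    rw [hq', hBdef, hBdef, hQsingle, hQsingle, hQsingle, hQsingle]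
    have key := Q_single_pair Q hinv hab hj01
    rw [key]
  -- expansion of Q under 2p = q
  have expand : 2 * p = q → ∀ y : Fin r → ℤ, Q y = p * (∑ i, y i) ^ 2 := by
    intro h y
    have key : ∀ s : Finset (Fin r),
        Q (∑ i ∈ s, Pi.single i (y i)) = p * (∑ i ∈ s, y i) ^ 2 := by
      intro s
      induction s using Finset.induction with
      | empty => simp [hQ0]
      | @insert a s ha ih =>
          rw [Finset.sum_insert ha, Finset.sum_insert ha]
          have hsingle_smul : ∀ (c : ℤ) (i : Fin r),
              (Pi.single i c : Fin r → ℤ) = c • (Pi.single i 1 : Fin r → ℤ) := by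
            intro c i
            funext j
            simp [Pi.single_apply, mul_comm]
          have hQa : Q (Pi.single a (y a)) = p * (y a) ^ 2 := by
            rw [hsingle_smul, hQ, hQsingle]
            ring
          have hBs : B (Pi.single a (y a)) (∑ i ∈ s, Pi.single i (y i))
              = q * (y a * ∑ i ∈ s, y i) := by
            rw [hsingle_smul, hBsmul, hBsum]
            have : ∀ i ∈ s, B (Pi.single a (1:ℤ)) (Pi.single i (y i)) = y i * q := by
              intro i hi
              rw [hsingle_smul (y i) i, hBsymm, hBsmul, hBsymm]
              rw [hBsingle a i (by rintro rfl; exact ha hi)]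
            rw [Finset.sum_congr rfl this, ← Finset.sum_mul]
            ring
          have hsum := hBdef (Pi.single a (y a)) (∑ i ∈ s, Pi.single i (y i))
          rw [hQa, ih, hBs] at hsum
          have : Q (Pi.single a (y a) + ∑ i ∈ s, Pi.single i (y i))
              = q * (y a * ∑ i ∈ s, y i) + p * (y a) ^ 2 + p * (∑ i ∈ s, y i) ^ 2 := by
            linarith
          rw [this, ← h]
          ring
    have := key Finset.univ
    rwa [Finset.univ_sum_single] at this
  constructor
  · exact expand
  · intro h
    have hq' : q = B (Pi.single (⟨0, by omega⟩ : Fin r) 1)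
        (Pi.single (⟨1, by omega⟩ : Fin r) 1) := hq
    have hj01 : (⟨0, by omega⟩ : Fin r) ≠ (⟨1, by omega⟩ : Fin r) := by
      simp [Fin.ext_iff]
    rw [hq', hBdef, h, h, hQsingle]
    have h1 : ∀ a : Fin r, (∑ i, Pi.single a (1:ℤ) i) = 1 := by
      intro a
      simp [Pi.single_apply]
    simp only [Pi.add_apply, Finset.sum_add_distrib, h1]
    ring
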